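/- arXiv:1707.03562 — 5 statements merged into one kernel-verified Lean document; each statement's English description precedes it below -/
import Mathlib

section
/- Let G be a finite group acting transitively on a finite set Ω with point stabilizer H, and suppose all involutions of G are conjugate to one another in G and G contains at least one involution. Then the maximal number of points of Ω fixed by an involution of G equals i₂(H) · |Ω| / i₂(G), where i₂(X) denotes the number of involutions (elements of order exactly 2) in a finite group X; in fact every involution of G fixing at least one point fixes exactly this many points. -/
open MulAction Finset

theorem stmt1 {G Ω : Type*} [Group G] [Fintype G] [Fintype Ω] [MulAction G Ω]
    [MulAction.IsPretransitive G Ω] (ω : Ω)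
    (hex : ∃ t : G, orderOf t = 2)
    (hconj : ∀ t s : G, orderOf t = 2 → orderOf s = 2 → ∃ g : G, g * t * g⁻¹ = s) :
    (∀ t : G, orderOf t = 2 → (MulAction.fixedBy Ω t).Nonempty →
      Nat.card (MulAction.fixedBy Ω t) * Nat.card {x : G | orderOf x = 2} =
        Nat.card {x : G | orderOf x = 2 ∧ x ∈ MulAction.stabilizer G ω} * Nat.card Ω) ∧
    ((Finset.univ.filter (fun t : G => orderOf t = 2)).sup
        (fun t => Nat.card (MulAction.fixedBy Ω t))) *
        Nat.card {x : G | orderOf x = 2} =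
      Nat.card {x : G | orderOf x = 2 ∧ x ∈ MulAction.stabilizer G ω} * Nat.card Ω := by
  classical
  obtain ⟨t₀, ht₀⟩ := hex
  -- all involutions have the same number of fixed points
  have hc : ∀ t : G, orderOf t = 2 →
      Nat.card (MulAction.fixedBy Ω t) = Nat.card (MulAction.fixedBy Ω t₀) := by
    intro t ht
    obtain ⟨g, hg⟩ := hconj t₀ t ht₀ ht
    rw [← hg, ← MulAction.smul_fixedBy Ω t₀ g,
      Nat.card_coe_set_eq, Nat.card_coe_set_eq, Set.ncard_smul_set]
  -- all stabilizers have the same number of involutions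
  have horder : ∀ g x : G, orderOf (g * x * g⁻¹) = orderOf x := fun g x =>
    orderOf_injective (MulAut.conj g).toMonoidHom (MulEquiv.injective _) x
  have hst : ∀ a : Ω, Nat.card {x : G | orderOf x = 2 ∧ x ∈ MulAction.stabilizer G a} =
      Nat.card {x : G | orderOf x = 2 ∧ x ∈ MulAction.stabilizer G ω} := by
    intro a
    obtain ⟨g, hg⟩ := MulAction.exists_smul_eq G ω a
    have himg : {x : G | orderOf x = 2 ∧ x ∈ MulAction.stabilizer G a} =
        (fun x => g * x * g⁻¹) '' {x : G | orderOf x = 2 ∧ x ∈ MulAction.stabilizer G ω} := by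
      ext x
      simp only [Set.mem_image, Set.mem_setOf_eq]
      constructor
      · rintro ⟨hx2, hxs⟩
        refine ⟨g⁻¹ * x * g, ⟨?_, ?_⟩, by group⟩
        · rw [← hx2]
          have := horder g⁻¹ x
          simpa using this
        · rw [MulAction.mem_stabilizer_iff] at hxs ⊢
          rw [← hg] at hxs
          simp only [mul_smul]
          simp [hxs]
      · rintro ⟨y, ⟨hy2, hys⟩, rfl⟩
        constructor
        · rw [← hy2]
          exact horder g y
        · rw [MulAction.mem_stabilizer_iff] at hys ⊢
          rw [← hg]
          simp only [mul_smul]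
          simp [hys]
    rw [himg, Nat.card_coe_set_eq, Nat.card_coe_set_eq,
      Set.ncard_image_of_injective _ (fun x y h => by
        have := mul_left_cancel (mul_right_cancel h); exact this)]
  -- express Nat.cards as Finset cards
  have hfixcard : ∀ t : G, Nat.card (MulAction.fixedBy Ω t) =
      (univ.filter (fun a : Ω => t • a = a)).card := by
    intro t
    rw [Nat.card_eq_fintype_card]
    simp [MulAction.fixedBy, Fintype.card_subtype]
    convert Fintype.card_subtype (fun x : Ω => t • x = x)
    exact Fintype.card_congr (Equiv.refl _)
  have hstabcard : ∀ a : Ω, Nat.card {x : G | orderOf x = 2 ∧ x ∈ MulAction.stabilizer G a} =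
      (univ.filter (fun x : G => orderOf x = 2 ∧ x • a = a)).card := by
    intro a
    rw [Nat.card_eq_fintype_card]
    simp [Fintype.card_subtype, MulAction.mem_stabilizer_iff]
  set I := univ.filter (fun t : G => orderOf t = 2) with hI
  set c := Nat.card (MulAction.fixedBy Ω t₀) with hcdef
  set cH := Nat.card {x : G | orderOf x = 2 ∧ x ∈ MulAction.stabilizer G ω} with hcH
  -- count of involutions
  have hIcard : Nat.card {x : G | orderOf x = 2} = I.card := by
    rw [Nat.card_eq_fintype_card]
    simp [hI, Fintype.card_subtype]
  -- double counting
  have key : c * I.card = cH * Fintype.card Ω := by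
    have h1 : ∑ t ∈ I, (univ.filter (fun a : Ω => t • a = a)).card
        = ∑ a : Ω, (univ.filter (fun t : G => orderOf t = 2 ∧ t • a = a)).card := by
      simp only [Finset.card_filter]
      rw [Finset.sum_comm]
      congr 1
      ext a
      rw [Finset.sum_filter]
      congr 1
      ext t
      by_cases h2 : orderOf t = 2 <;> simp [h2]
    have h2 : ∑ t ∈ I, (univ.filter (fun a : Ω => t • a = a)).card = c * I.card := by
      rw [mul_comm]
      rw [Finset.sum_congr rfl (fun t ht => by
        rw [← hfixcard t, hc t (by simpa [hI] using ht)]), Finset.sum_const, smul_eq_mul]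
    have h3 : ∑ a : Ω, (univ.filter (fun t : G => orderOf t = 2 ∧ t • a = a)).card
        = cH * Fintype.card Ω := by
      rw [mul_comm]
      rw [Finset.sum_congr rfl (fun a _ => by
        rw [← hstabcard a, hst a]), Finset.sum_const, smul_eq_mul, Finset.card_univ]
    rw [← h2, h1, h3]
  have hΩ : Nat.card Ω = Fintype.card Ω := Nat.card_eq_fintype_card
  constructor
  · intro t ht _
    rw [hc t ht, hIcard, hΩ]
    exact key
  · have hsup : I.sup (fun t => Nat.card (MulAction.fixedBy Ω t)) = c := by
      have hne : I.Nonempty := ⟨t₀, by simp [hI, ht₀]⟩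
      rw [Finset.sup_congr rfl (fun t ht => hc t (by simpa [hI] using ht))]
      exact Finset.sup_const hne c
    rw [hsup, hIcard, hΩ]
    exact key
end

section
/- Let G be a finite group acting transitively on a finite set Ω with point stabilizer H, and let t ∈ H be an involution. Then the number of fixed points of t on Ω is at least (|t^H| / |t^G|) · |Ω|, where t^H and t^G denote the conjugacy classes of t in H and G respectively. -/
open MulAction Subgroup

lemma stab_subgroup {G X : Type*} [Group G] [MulAction G X] (S : Subgroup G) (x : X) :
    MulAction.stabilizer S x = (MulAction.stabilizer G x).subgroupOf S := by
  ext g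
  simp [Subgroup.mem_subgroupOf, MulAction.mem_stabilizer_iff, Subgroup.smul_def]

lemma card_subgroupOf {G : Type*} [Group G] (H K : Subgroup G) :
    Nat.card (H.subgroupOf K) = Nat.card ↥(H ⊓ K) := by
  rw [← inf_subgroupOf_right]
  exact Nat.card_congr (subgroupOfEquivOfLe inf_le_right).toEquiv

lemma orbit_stab_nat {G X : Type*} [Group G] [Finite G] [MulAction G X] (x : X) :
    Nat.card (orbit G x) * Nat.card (stabilizer G x) = Nat.card G := by
  rw [Nat.card_coe_set_eq, ← index_stabilizer, mul_comm]
  exact Subgroup.card_mul_index _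

theorem stmt2 {G Ω : Type*} [Group G] [Fintype G] [Fintype Ω] [MulAction G Ω]
    [MulAction.IsPretransitive G Ω] (ω : Ω) (t : G)
    (ht : t ∈ MulAction.stabilizer G ω) (h2 : orderOf t = 2) :
    Nat.card {g : G | ∃ h ∈ MulAction.stabilizer G ω, g = h * t * h⁻¹} * Nat.card Ω ≤
    Nat.card (MulAction.fixedBy Ω t) * Nat.card {g : G | ∃ c : G, g = c * t * c⁻¹} := by
  classical
  set K := MulAction.stabilizer G ω with hK
  set C := Subgroup.centralizer {t} with hC
  set e := (ConjAct.toConjAct : G ≃* ConjAct G)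
  set H' : Subgroup (ConjAct G) := K.map e.toMonoidHom with hH'
  -- set identifications
  have hbset : {g : G | ∃ c : G, g = c * t * c⁻¹} = orbit (ConjAct G) t := by
    ext g
    simp only [Set.mem_setOf_eq, MulAction.mem_orbit_iff]
    constructor
    · rintro ⟨c, rfl⟩
      exact ⟨ConjAct.toConjAct c, by simp [ConjAct.smul_def]⟩
    · rintro ⟨c, rfl⟩
      exact ⟨ConjAct.ofConjAct c, by simp [ConjAct.smul_def]⟩
  have haset : {g : G | ∃ h ∈ K, g = h * t * h⁻¹} = orbit H' t := by
    ext g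
    simp only [Set.mem_setOf_eq, MulAction.mem_orbit_iff]
    constructor
    · rintro ⟨h, hh, rfl⟩
      refine ⟨⟨e h, h, hh, rfl⟩, ?_⟩
      rfl
    · rintro ⟨⟨c, h, hh, rfl⟩, rfl⟩
      exact ⟨h, hh, rfl⟩
  -- stabilizer of t under conjugation is (image of) the centralizer
  have hstabt : stabilizer (ConjAct G) t = C.map e.toMonoidHom := by
    rw [hC, Subgroup.centralizer_eq_comap_stabilizer]
    exact (Subgroup.map_comap_eq_self_of_surjective (f := e.toMonoidHom) e.surjective _).symm
  -- cardinal identities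
  have F1 : Nat.card (orbit H' t) * Nat.card (stabilizer H' t) = Nat.card K := by
    rw [orbit_stab_nat]
    exact Nat.card_congr (Subgroup.equivMapOfInjective K _ e.injective).toEquiv.symm
  have F2 : Nat.card (orbit (ConjAct G) t) * Nat.card (stabilizer (ConjAct G) t)
      = Nat.card G := by
    rw [orbit_stab_nat]
    exact Nat.card_congr e.toEquiv.symm
  have F3 : Nat.card Ω * Nat.card K = Nat.card G := by
    rw [← index_stabilizer_of_transitive G ω, mul_comm]
    exact Subgroup.card_mul_index _
  have F4 : Nat.card (orbit C ω) * Nat.card (stabilizer C ω) = Nat.card C :=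
    orbit_stab_nat ω
  -- the two "small" stabilizers have the same cardinality
  have M5 : Nat.card (stabilizer H' t) = Nat.card (stabilizer C ω) := by
    rw [stab_subgroup, stab_subgroup, ← hK, card_subgroupOf, card_subgroupOf, hstabt, hH',
      ← Subgroup.map_inf _ _ _ e.injective]
    calc Nat.card ↥((C ⊓ K).map e.toMonoidHom) = Nat.card ↥(C ⊓ K) :=
          (Nat.card_congr (Subgroup.equivMapOfInjective _ _ e.injective).toEquiv).symm
      _ = Nat.card ↥(K ⊓ C) := by rw [inf_comm]
  have hcent : Nat.card (stabilizer (ConjAct G) t) = Nat.card C := by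
    rw [hstabt]
    exact (Nat.card_congr (Subgroup.equivMapOfInjective _ _ e.injective).toEquiv).symm
  -- orbit of ω under C consists of fixed points of t
  have M6 : Nat.card (orbit C ω) ≤ Nat.card (MulAction.fixedBy Ω t) := by
    have hsub : orbit C ω ⊆ MulAction.fixedBy Ω t := by
      rintro x ⟨⟨c, hc⟩, rfl⟩
      have hct : c * t = t * c := (Subgroup.mem_centralizer_iff.mp hc t rfl).symm
      rw [MulAction.mem_fixedBy]
      show t • ((⟨c, hc⟩ : C) • ω) = (⟨c, hc⟩ : C) • ω
      have hcoe : (⟨c, hc⟩ : C) • ω = c • ω := rfl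
      rw [hcoe, smul_smul, ← hct, mul_smul, MulAction.mem_stabilizer_iff.mp ht]
    rw [Nat.card_coe_set_eq, Nat.card_coe_set_eq]
    exact Set.ncard_le_ncard hsub (Set.toFinite _)
  -- arithmetic
  rw [haset, hbset]
  have hspos : 0 < Nat.card (stabilizer H' t) := Nat.card_pos
  apply Nat.le_of_mul_le_mul_right _ hspos
  calc Nat.card (orbit H' t) * Nat.card Ω * Nat.card (stabilizer H' t)
      = Nat.card (orbit H' t) * Nat.card (stabilizer H' t) * Nat.card Ω := by ring
    _ = Nat.card K * Nat.card Ω := by rw [F1]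
    _ = Nat.card G := by rw [mul_comm]; exact F3
    _ = Nat.card (orbit (ConjAct G) t) * Nat.card (stabilizer (ConjAct G) t) := F2.symm
    _ = Nat.card (orbit (ConjAct G) t) * Nat.card C := by rw [hcent]
    _ = Nat.card (orbit (ConjAct G) t) * (Nat.card (orbit C ω) * Nat.card (stabilizer C ω)) := by
        rw [F4]
    _ = Nat.card (orbit C ω) * Nat.card (orbit (ConjAct G) t) * Nat.card (stabilizer C ω) := by
        ring
    _ = Nat.card (orbit C ω) * Nat.card (orbit (ConjAct G) t) * Nat.card (stabilizer H' t) := by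
        rw [M5]
    _ ≤ Nat.card (MulAction.fixedBy Ω t) * Nat.card (orbit (ConjAct G) t) *
          Nat.card (stabilizer H' t) :=
        Nat.mul_le_mul_right _ (Nat.mul_le_mul_right _ M6)
end

section
/- Let X be a finite group and Y ≤ Z(X) a central subgroup. Then for any s ∈ X, the coset sY contains at most |Y|₂ elements whose order is a power of 2, where |Y|₂ denotes the largest power of 2 dividing |Y|. -/
theorem stmt4 {X : Type*} [Group X] [Fintype X] (Y : Subgroup X)
    (hY : Y ≤ Subgroup.center X) (s : X) :
    Nat.card {x : X | (∃ y ∈ Y, x = s * y) ∧ ∃ k : ℕ, orderOf x = 2 ^ k} ≤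
    2 ^ ((Nat.card Y).factorization 2) := by
  classical
  set S : Set X := {x : X | (∃ y ∈ Y, x = s * y) ∧ ∃ k : ℕ, orderOf x = 2 ^ k} with hS
  rcases Set.eq_empty_or_nonempty S with h | ⟨x₀, hx₀⟩
  · simp [h]
  letI : CommGroup Y := { (inferInstance : Group Y) with mul_comm := fun a b => Subtype.ext <|
    (Subgroup.mem_center_iff.mp (hY a.2) b).symm }
  haveI : Fact (Nat.Prime 2) := ⟨Nat.prime_two⟩
  obtain ⟨⟨y₀, hy₀Y, hy₀⟩, k₀, hk₀⟩ := hx₀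
  -- the map x ↦ x₀⁻¹ * x lands in the 2-primary component of Y
  have key : ∀ x ∈ S, x₀⁻¹ * x ∈ Y ∧ ∃ k, orderOf (x₀⁻¹ * x) = 2 ^ k := by
    rintro x ⟨⟨y, hyY, hy⟩, k, hk⟩
    have hmem : x₀⁻¹ * x ∈ Y := by
      have : x₀⁻¹ * x = y₀⁻¹ * y := by
        rw [hy₀, hy]; group
      rw [this]; exact Y.mul_mem (Y.inv_mem hy₀Y) hyY
    refine ⟨hmem, ?_⟩
    have hc : Commute x₀⁻¹ x := by
      have hz := Subgroup.mem_center_iff.mp (hY hmem) x₀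
      show x₀⁻¹ * x = x * x₀⁻¹
      have hxx : x * x₀⁻¹ = x₀ * (x₀⁻¹ * x) * x₀⁻¹ := by group
      rw [hxx, hz]; group
    have hdvd : orderOf (x₀⁻¹ * x) ∣ 2 ^ (max k₀ k) := by
      apply orderOf_dvd_of_pow_eq_one
      rw [hc.mul_pow, inv_pow]
      have h1 : x₀ ^ 2 ^ max k₀ k = 1 :=
        orderOf_dvd_iff_pow_eq_one.mp (hk₀ ▸ pow_dvd_pow 2 (le_max_left _ _))
      have h2 : x ^ 2 ^ max k₀ k = 1 :=
        orderOf_dvd_iff_pow_eq_one.mp (hk ▸ pow_dvd_pow 2 (le_max_right _ _))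
      rw [h1, h2, inv_one, one_mul]
    obtain ⟨j, -, hj⟩ := (Nat.dvd_prime_pow Nat.prime_two).mp hdvd
    exact ⟨j, hj⟩
  -- injection into the primary component
  set T := CommGroup.primaryComponent Y 2 with hT
  have hinj : Nat.card S ≤ Nat.card T := by
    apply Nat.card_le_card_of_injective
      (fun x : S => (⟨⟨x₀⁻¹ * x, (key x x.2).1⟩, by
        obtain ⟨-, j, hj⟩ := key x x.2
        exact ⟨j, by rw [← hj]; exact Subtype.ext (pow_orderOf_eq_one (x₀⁻¹ * (x : X)))⟩⟩ : T))
    intro a b hab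
    have := congrArg (fun t : T => (t : X)) hab
    simp only [Subgroup.coe_mk] at this
    exact Subtype.ext (mul_left_cancel this)
  refine hinj.trans ?_
  obtain ⟨n, hn⟩ := IsPGroup.iff_card.mp (CommGroup.primaryComponent.isPGroup (G := Y) (p := 2))
  rw [hn]
  have hdvd : (2 : ℕ) ^ n ∣ Nat.card Y := hn ▸ Subgroup.card_subgroup_dvd_card T
  have hle : n ≤ (Nat.card Y).factorization 2 :=
    (Nat.Prime.pow_dvd_iff_le_factorization Nat.prime_two Nat.card_pos.ne').mp hdvd
  exact Nat.pow_le_pow_right (by norm_num) hle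
end

section
/- Let q be an odd prime power. Then the number of involutions in PGL₂(𝔽_q) = GL₂(𝔽_q)/Z(GL₂(𝔽_q)) is exactly q². -/
open Matrix

section Aux
variable {F : Type*} [Field F] [Fintype F]

def uMat : GL (Fin 2) F :=
  ⟨!![1,1;0,1], !![1,-1;0,1], by ext i j; fin_cases i <;> fin_cases j <;> simp [Matrix.mul_apply, Fin.sum_univ_succ, Matrix.one_apply],
    by ext i j; fin_cases i <;> fin_cases j <;> simp [Matrix.mul_apply, Fin.sum_univ_succ, Matrix.one_apply]⟩

def vMat : GL (Fin 2) F :=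
  ⟨!![1,0;1,1], !![1,0;-1,1], by ext i j; fin_cases i <;> fin_cases j <;> simp [Matrix.mul_apply, Fin.sum_univ_succ, Matrix.one_apply],
    by ext i j; fin_cases i <;> fin_cases j <;> simp [Matrix.mul_apply, Fin.sum_univ_succ, Matrix.one_apply]⟩

theorem center_iff {g : GL (Fin 2) F} :
    g ∈ Subgroup.center (GL (Fin 2) F) ↔ ∃ a : F, (g : Matrix (Fin 2) (Fin 2) F) = a • 1 := by
  constructor
  · intro hg
    rw [Subgroup.mem_center_iff] at hg
    have hu := congrArg Units.val (hg uMat)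
    have hv := congrArg Units.val (hg vMat)
    simp only [Units.val_mul, uMat, vMat] at hu hv
    have e1 := congrFun (congrFun hu 0) 0
    have e2 := congrFun (congrFun hu 0) 1
    have e3 := congrFun (congrFun hv 0) 0
    simp [Matrix.mul_apply, Fin.sum_univ_succ] at e1 e2 e3
    refine ⟨g.val 0 0, ?_⟩
    rw [Matrix.eta_fin_two g.val]
    ext i j
    fin_cases i <;> fin_cases j <;>
      simp [Matrix.one_apply, e1, e3] <;> linear_combination e2
  · intro ⟨a, ha⟩
    rw [Subgroup.mem_center_iff]
    intro h
    ext : 1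
    simp [Units.val_mul, ha]

noncomputable def equivGLtraceless :
    {g : GL (Fin 2) F // Matrix.trace (g : Matrix (Fin 2) (Fin 2) F) = 0} ≃
      {M : Matrix (Fin 2) (Fin 2) F // Matrix.trace M = 0 ∧ M.det ≠ 0} := by
  apply Equiv.ofBijective (fun g => ⟨(g.1 : Matrix (Fin 2) (Fin 2) F), g.2, by
    have : IsUnit (g.1 : Matrix (Fin 2) (Fin 2) F) := g.1.isUnit
    rw [Matrix.isUnit_iff_isUnit_det, isUnit_iff_ne_zero] at this
    exact this⟩)
  constructor
  · intro g h hgh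
    simp only [Subtype.mk.injEq] at hgh
    exact Subtype.ext (Units.ext hgh)
  · rintro ⟨M, htr, hdet⟩
    have : IsUnit M := by
      rw [Matrix.isUnit_iff_isUnit_det, isUnit_iff_ne_zero]; exact hdet
    obtain ⟨u, hu⟩ := this
    exact ⟨⟨u, by rw [hu]; exact htr⟩, by simp [hu]⟩

noncomputable def scalarHom : Fˣ →* GL (Fin 2) F := Units.map (Matrix.scalar (Fin 2)).toMonoidHom

theorem card_center (h : ∀ g : GL (Fin 2) F, g ∈ Subgroup.center (GL (Fin 2) F) ↔
    ∃ a : F, (g : Matrix (Fin 2) (Fin 2) F) = a • 1) :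
    Nat.card (Subgroup.center (GL (Fin 2) F)) = Fintype.card F - 1 := by
  classical
  have hrange : (scalarHom (F := F)).range = Subgroup.center (GL (Fin 2) F) := by
    ext g
    rw [h g]
    constructor
    · rintro ⟨a, rfl⟩
      refine ⟨a, ?_⟩
      simp [scalarHom, Matrix.scalar, smul_eq_diagonal_mul]
    · rintro ⟨a, ha⟩
      have ha0 : a ≠ 0 := by
        intro h0
        apply one_ne_zero (α := Matrix (Fin 2) (Fin 2) F)
        calc (1 : Matrix (Fin 2) (Fin 2) F) = g.val * g.inv := g.val_inv.symm
        _ = 0 := by rw [ha, h0]; simp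
      refine ⟨Units.mk0 a ha0, Units.ext ?_⟩
      simp [scalarHom, ha, Matrix.scalar_apply, Matrix.smul_one_eq_diagonal]
  have hinj : Function.Injective (scalarHom (F := F)) := by
    intro a b hab
    have h1 : (Matrix.scalar (Fin 2) (a : F)) = Matrix.scalar (Fin 2) (b : F) := by
      have := congrArg (fun u : GL (Fin 2) F => (u : Matrix (Fin 2) (Fin 2) F)) hab
      simpa [scalarHom] using this
    exact Units.ext (Matrix.scalar_inj.mp h1)
  rw [← hrange, Nat.card_congr (MonoidHom.ofInjective hinj).toEquiv.symm,
    Nat.card_eq_fintype_card, Fintype.card_units]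

noncomputable def equivTriples :
    {M : Matrix (Fin 2) (Fin 2) F // Matrix.trace M = 0 ∧ M.det ≠ 0} ≃
      {p : F × F × F // p.2.1 * p.2.2 ≠ -p.1^2} where
  toFun M := ⟨(M.1 0 0, M.1 0 1, M.1 1 0), by
    obtain ⟨M, htr, hdet⟩ := M
    have h11 : M 1 1 = -M 0 0 := by
      have := htr; rw [Matrix.trace_fin_two] at this; linear_combination this
    rw [Matrix.det_fin_two, h11] at hdet
    intro h; apply hdet; rw [h]; ring⟩
  invFun p := ⟨!![p.1.1, p.1.2.1; p.1.2.2, -p.1.1], by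
    constructor
    · simp [Matrix.trace_fin_two]
    · rw [Matrix.det_fin_two_of]
      intro h; apply p.2; linear_combination -h⟩
  left_inv M := by
    obtain ⟨M, htr, hdet⟩ := M
    have h11 : M 1 1 = -M 0 0 := by
      rw [Matrix.trace_fin_two] at htr; linear_combination htr
    apply Subtype.ext
    simp only
    conv_rhs => rw [Matrix.eta_fin_two M]
    rw [h11]
  right_inv p := by
    ext <;> simp

theorem count_triples :
    Nat.card {p : F × F × F // p.2.1 * p.2.2 ≠ -p.1^2} =
      Fintype.card F ^ 2 * (Fintype.card F - 1) := by
  classical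
  rw [Nat.card_eq_fintype_card]
  set q := Fintype.card F with hq
  have inner : ∀ a b : F, Fintype.card {c : F // b * c ≠ -a^2} =
      if b = 0 then (if a = 0 then 0 else q) else q - 1 := by
    intro a b
    rw [Fintype.card_subtype]
    by_cases hb : b = 0
    · subst hb
      by_cases ha : a = 0
      · simp [ha]
      · simp [ha, neg_eq_zero, pow_eq_zero_iff, Finset.filter_true_of_mem, hq]
    · rw [if_neg hb]
      have : ∀ c : F, (b * c ≠ -a^2) ↔ c ≠ b⁻¹ * (-a^2) := by
        intro c; rw [not_iff_not]; field_simp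
      rw [Finset.filter_congr (fun c _ => by rw [this])]
      rw [Finset.filter_ne', Finset.card_erase_of_mem (Finset.mem_univ _), hq, Finset.card_univ]
  have sumif : ∀ (m n : ℕ), (∑ x : F, if x = 0 then m else n) = m + (q-1) * n := by
    intro m n
    rw [← Finset.add_sum_erase Finset.univ _ (Finset.mem_univ (0:F))]
    simp only [if_pos rfl]
    congr 1
    rw [Finset.sum_congr rfl (fun x hx => if_neg (Finset.ne_of_mem_erase hx)),
      Finset.sum_const, smul_eq_mul, Finset.card_erase_of_mem (Finset.mem_univ _),
      Finset.card_univ]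
  have e : {p : F × F × F // p.2.1 * p.2.2 ≠ -p.1^2} ≃
      Σ a : F, Σ b : F, {c : F // b * c ≠ -a^2} := by
    refine Equiv.trans
      (Equiv.subtypeProdEquivSigmaSubtype (p := fun (a : F) (bc : F × F) => bc.1 * bc.2 ≠ -a^2)) ?_
    exact Equiv.sigmaCongrRight fun a =>
      Equiv.subtypeProdEquivSigmaSubtype (p := fun (b c : F) => b * c ≠ -a^2)
  rw [Fintype.card_congr e, Fintype.card_sigma]
  have hsum : ∀ a : F, (∑ x : F, Fintype.card {c : F // x * c ≠ -a^2}) =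
      (if a = 0 then 0 else q) + (q - 1) * (q - 1) := by
    intro a
    simp_rw [inner a]
    exact sumif _ _
  simp_rw [Fintype.card_sigma, hsum]
  rw [Finset.sum_add_distrib, sumif, Finset.sum_const, Finset.card_univ, ← hq]
  have hq1 : 1 ≤ q := Fintype.card_pos
  obtain ⟨s, hs⟩ : ∃ s, q = s + 1 := ⟨q - 1, (Nat.succ_pred_eq_of_pos hq1).symm⟩
  rw [hs]
  simp only [Nat.add_sub_cancel, smul_eq_mul]
  ring

theorem ch2 (M : Matrix (Fin 2) (Fin 2) F) :
    M * M = (Matrix.trace M) • M - (M.det) • 1 := by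
  rw [Matrix.eta_fin_two M]
  ext i j
  fin_cases i <;> fin_cases j <;>
    simp [Matrix.mul_apply, Fin.sum_univ_succ, Matrix.trace_fin_two, Matrix.det_fin_two,
      Matrix.one_apply] <;> ring

theorem main_glue (hodd : Odd (Fintype.card F))
    (center_iff : ∀ {g : GL (Fin 2) F}, g ∈ Subgroup.center (GL (Fin 2) F) ↔
      ∃ a : F, (g : Matrix (Fin 2) (Fin 2) F) = a • 1) :
    QuotientGroup.mk ⁻¹' {x : GL (Fin 2) F ⧸ Subgroup.center (GL (Fin 2) F) | orderOf x = 2} =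
      {g : GL (Fin 2) F | Matrix.trace (g : Matrix (Fin 2) (Fin 2) F) = 0} := by
  have h2 : (2 : F) ≠ 0 := by
    apply Ring.two_ne_zero
    intro hc
    rw [FiniteField.even_card_iff_char_two] at hc
    obtain ⟨k, hk⟩ := hodd
    omega
  have gne : ∀ g : GL (Fin 2) F, (g : Matrix (Fin 2) (Fin 2) F) ≠ 0 := by
    intro g hg0
    apply one_ne_zero (α := Matrix (Fin 2) (Fin 2) F)
    calc (1 : Matrix (Fin 2) (Fin 2) F) = g.val * g.inv := g.val_inv.symm
    _ = 0 := by rw [hg0]; simp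
  ext g
  have horder : orderOf (QuotientGroup.mk g : GL (Fin 2) F ⧸ Subgroup.center (GL (Fin 2) F)) = 2 ↔
      g ^ 2 ∈ Subgroup.center (GL (Fin 2) F) ∧ g ∉ Subgroup.center (GL (Fin 2) F) := by
    constructor
    · intro h
      refine ⟨?_, fun hc => ?_⟩
      · rw [← QuotientGroup.eq_one_iff, QuotientGroup.mk_pow]
        have hp := pow_orderOf_eq_one
          (QuotientGroup.mk g : GL (Fin 2) F ⧸ Subgroup.center (GL (Fin 2) F))
        rwa [h] at hp
      · rw [← QuotientGroup.eq_one_iff] at hc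
        rw [hc, orderOf_one] at h
        omega
    · rintro ⟨hsq, hnc⟩
      have : Fact (Nat.Prime 2) := ⟨Nat.prime_two⟩
      refine orderOf_eq_prime ?_ fun he => hnc ((QuotientGroup.eq_one_iff g).mp he)
      rw [← QuotientGroup.mk_pow, QuotientGroup.eq_one_iff]
      exact hsq
  simp only [Set.mem_preimage, Set.mem_setOf_eq, horder]
  constructor
  · rintro ⟨hsq, hnc⟩
    obtain ⟨a, ha⟩ := center_iff.mp hsq
    rw [pow_two, Units.val_mul, ch2] at ha
    by_contra htr
    apply hnc
    rw [center_iff]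
    refine ⟨(Matrix.trace (g : Matrix (Fin 2) (Fin 2) F))⁻¹ * (a + (g : Matrix (Fin 2) (Fin 2) F).det), ?_⟩
    have key : (Matrix.trace (g : Matrix (Fin 2) (Fin 2) F)) • (g : Matrix (Fin 2) (Fin 2) F)
        = (a + (g : Matrix (Fin 2) (Fin 2) F).det) • 1 := by
      rw [sub_eq_iff_eq_add] at ha
      rw [ha, add_smul, add_comm]
    calc (g : Matrix (Fin 2) (Fin 2) F)
        = (Matrix.trace (g : Matrix (Fin 2) (Fin 2) F))⁻¹ •
          ((Matrix.trace (g : Matrix (Fin 2) (Fin 2) F)) • (g : Matrix (Fin 2) (Fin 2) F)) := by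
          rw [smul_smul, inv_mul_cancel₀ htr, one_smul]
      _ = _ := by rw [key, smul_smul]
  · intro htr
    refine ⟨center_iff.mpr ⟨-(g : Matrix (Fin 2) (Fin 2) F).det, ?_⟩, fun hc => ?_⟩
    · rw [pow_two, Units.val_mul, ch2, htr, zero_smul, zero_sub, neg_smul]
    · obtain ⟨a, ha⟩ := center_iff.mp hc
      have htra : Matrix.trace (g : Matrix (Fin 2) (Fin 2) F) = a * 2 := by
        rw [ha, Matrix.trace_smul, Matrix.trace_one, smul_eq_mul]
        simp [Fintype.card_fin]
      rw [htr] at htra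
      have ha0 : a = 0 := by
        rcases mul_eq_zero.mp htra.symm with h | h
        · exact h
        · exact absurd h h2
      exact gne g (by rw [ha, ha0, zero_smul])

end Aux

theorem stmt11 {F : Type*} [Field F] [Fintype F] (hodd : Odd (Fintype.card F)) :
    Nat.card {x : GL (Fin 2) F ⧸ Subgroup.center (GL (Fin 2) F) | orderOf x = 2} =
      Fintype.card F ^ 2 := by
  classical
  have hpre := Nat.card_congr (QuotientGroup.preimageMkEquivSubgroupProdSet
    (Subgroup.center (GL (Fin 2) F))
    {x : GL (Fin 2) F ⧸ Subgroup.center (GL (Fin 2) F) | orderOf x = 2})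
  rw [Nat.card_prod, main_glue hodd (fun {g} => center_iff),
    card_center (fun g => center_iff)] at hpre
  have hS : Nat.card {g : GL (Fin 2) F | Matrix.trace (g : Matrix (Fin 2) (Fin 2) F) = 0} =
      Fintype.card F ^ 2 * (Fintype.card F - 1) := by
    have e : ↥{g : GL (Fin 2) F | Matrix.trace (g : Matrix (Fin 2) (Fin 2) F) = 0} ≃
        {p : F × F × F // p.2.1 * p.2.2 ≠ -p.1 ^ 2} :=
      (Equiv.subtypeEquivRight (fun g => Iff.rfl)).trans
        ((equivGLtraceless (F := F)).trans (equivTriples (F := F)))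
    rw [Nat.card_congr e]
    exact count_triples
  have hq2 : 1 < Fintype.card F := Fintype.one_lt_card
  have h3 : (Fintype.card F - 1) *
      Nat.card {x : GL (Fin 2) F ⧸ Subgroup.center (GL (Fin 2) F) | orderOf x = 2} =
      Fintype.card F ^ 2 * (Fintype.card F - 1) := by
    rw [← hpre]; exact hS
  apply Nat.eq_of_mul_eq_mul_left (show 0 < Fintype.card F - 1 by omega)
  rw [h3]; ring
end

section
/- Let q be an odd prime power. The number of involutions in PSL₂(𝔽_q) equals q(q+1)/2 if q ≡ 1 (mod 4), and equals q(q−1)/2 if q ≡ 3 (mod 4). -/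
open Matrix Finset

namespace Stmt12Aux

variable {F : Type*} [Field F] [Fintype F]

local notation "SL2" => Matrix.SpecialLinearGroup (Fin 2) F

instance : Fact (Even (Fintype.card (Fin 2))) := ⟨⟨1, by norm_num⟩⟩

lemma two_ne (hodd : Odd (Fintype.card F)) : (2 : F) ≠ 0 := by
  intro h
  have h2 : ringChar F = 2 := CharP.ringChar_of_prime_eq_zero Nat.prime_two h
  have := FiniteField.even_card_of_char_two h2
  rcases hodd with ⟨k, hk⟩
  omega

lemma neg_diag : (diagonal (fun _ => (-1 : F)) : Matrix (Fin 2) (Fin 2) F) = -1 := by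
  ext i j
  rcases eq_or_ne i j with rfl | h
  · simp
  · simp [Matrix.diagonal_apply_ne _ h, Matrix.one_apply_ne h]

lemma mem_center_iff' {g : SL2} :
    g ∈ Subgroup.center SL2 ↔ g = 1 ∨ g = -1 := by
  rw [Matrix.SpecialLinearGroup.mem_center_iff]
  constructor
  · rintro ⟨r, hr, hs⟩
    have hr' : (r - 1) * (r + 1) = 0 := by
      have hh : r ^ Fintype.card (Fin 2) = r ^ 2 := by norm_num
      rw [hh] at hr; linear_combination hr
    rcases mul_eq_zero.mp hr' with h | h
    · left
      have : r = 1 := by linear_combination h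
      subst this
      apply Subtype.ext
      rw [← hs]; simp
    · right
      have : r = -1 := by linear_combination h
      subst this
      apply Subtype.ext
      rw [← hs]
      simp [Matrix.scalar_apply, Matrix.SpecialLinearGroup.coe_neg, neg_diag]
  · rintro (rfl | rfl)
    · exact ⟨1, by norm_num, by simp⟩
    · refine ⟨-1, by norm_num, ?_⟩
      simp [Matrix.scalar_apply, Matrix.SpecialLinearGroup.coe_neg, neg_diag]

lemma one_ne_neg_one (h2 : (2:F) ≠ 0) : (1 : SL2) ≠ -1 := by
  intro h
  have := congrFun (congrFun (congrArg Subtype.val h) 0) 0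
  simp [Matrix.SpecialLinearGroup.coe_neg, Matrix.neg_apply, Matrix.one_apply] at this
  exact h2 (by linear_combination this)

lemma entries_of_sq_neg_one (h2 : (2:F) ≠ 0) {g : SL2} (h : g ^ 2 = -1) :
    g.1 1 1 = -(g.1 0 0) ∧ g.1 0 1 * g.1 1 0 = -(1 + g.1 0 0 ^ 2) := by
  have hdet := g.2
  rw [Matrix.det_fin_two] at hdet
  have hm : g.1 * g.1 = -1 := by
    have := congrArg Subtype.val h
    simpa [sq] using this
  have e00 := congrFun (congrFun hm 0) 0
  have e01 := congrFun (congrFun hm 0) 1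
  simp [Matrix.mul_apply, Fin.sum_univ_two, Matrix.neg_apply, Matrix.one_apply] at e00 e01
  have had : g.1 0 0 + g.1 1 1 = 0 := by
    by_contra hne
    have hb : g.1 0 1 = 0 := by
      have h' : g.1 0 1 * (g.1 0 0 + g.1 1 1) = 0 := by linear_combination e01
      exact (mul_eq_zero.mp h').resolve_right hne
    have ha : g.1 0 0 ≠ 0 := by
      intro h0
      rw [hb, h0] at e00
      simp at e00
    have h' : g.1 0 0 * (g.1 0 0 + g.1 1 1) = 0 := by
      rw [hb] at e00 hdet
      linear_combination e00 + hdet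
    exact hne ((mul_eq_zero.mp h').resolve_left ha)
  constructor
  · linear_combination had
  · linear_combination e00

lemma eq_pm_one_of_sq_eq_one (h2 : (2:F) ≠ 0) {g : SL2} (h : g ^ 2 = 1) :
    g = 1 ∨ g = -1 := by
  have hdet := g.2
  rw [Matrix.det_fin_two] at hdet
  have hm : g.1 * g.1 = 1 := by
    have := congrArg Subtype.val h
    simpa [sq] using this
  have e00 := congrFun (congrFun hm 0) 0
  have e01 := congrFun (congrFun hm 0) 1
  have e10 := congrFun (congrFun hm 1) 0
  simp [Matrix.mul_apply, Fin.sum_univ_two, Matrix.one_apply] at e00 e01 e10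
  rcases eq_or_ne (g.1 0 0 + g.1 1 1) 0 with had | had
  · exfalso
    apply h2
    linear_combination (g.1 0 0) * had - e00 - hdet
  · have hb : g.1 0 1 = 0 := by
      have h' : g.1 0 1 * (g.1 0 0 + g.1 1 1) = 0 := by linear_combination e01
      exact (mul_eq_zero.mp h').resolve_right had
    have hc : g.1 1 0 = 0 := by
      have h' : g.1 1 0 * (g.1 0 0 + g.1 1 1) = 0 := by linear_combination e10
      exact (mul_eq_zero.mp h').resolve_right had
    have ha2 : g.1 0 0 ^ 2 = 1 := by
      rw [hb] at e00; linear_combination e00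
    have ha0 : g.1 0 0 ≠ 0 := by
      intro h0; rw [h0] at ha2; simp at ha2
    have hd : g.1 1 1 = g.1 0 0 := by
      have h' : g.1 0 0 * (g.1 1 1 - g.1 0 0) = 0 := by
        rw [hb, hc] at hdet
        linear_combination hdet - ha2
      have := (mul_eq_zero.mp h').resolve_left ha0
      linear_combination this
    have : (g.1 0 0 - 1) * (g.1 0 0 + 1) = 0 := by linear_combination ha2
    rcases mul_eq_zero.mp this with h' | h'
    · left
      have ha : g.1 0 0 = 1 := by linear_combination h'
      apply Subtype.ext
      rw [Matrix.eta_fin_two (g.1 : Matrix (Fin 2) (Fin 2) F), hb, hc, ha, hd.trans ha]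
      ext i j
      fin_cases i <;> fin_cases j <;>
        simp [Matrix.SpecialLinearGroup.coe_one, Matrix.one_apply]
    · right
      have ha : g.1 0 0 = -1 := by linear_combination h'
      apply Subtype.ext
      rw [Matrix.eta_fin_two (g.1 : Matrix (Fin 2) (Fin 2) F), hb, hc, ha, hd.trans ha]
      ext i j
      fin_cases i <;> fin_cases j <;>
        simp [Matrix.SpecialLinearGroup.coe_neg, Matrix.SpecialLinearGroup.coe_one,
          Matrix.neg_apply, Matrix.one_apply]

def mkT (a b c : F) (h : b * c = -(1 + a^2)) : SL2 :=
  ⟨!![a, b; c, -a], by rw [Matrix.det_fin_two_of]; linear_combination -h⟩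

lemma mkT_sq (a b c : F) (h : b * c = -(1 + a^2)) : (mkT a b c h) ^ 2 = -1 := by
  apply Subtype.ext
  rw [Matrix.SpecialLinearGroup.coe_pow, Matrix.SpecialLinearGroup.coe_neg, sq]
  show !![a, b; c, -a] * !![a, b; c, -a] = -(1 : Matrix (Fin 2) (Fin 2) F)
  ext i j
  fin_cases i <;> fin_cases j <;>
    simp [Matrix.mul_fin_two, Matrix.mul_apply, Fin.sum_univ_two, Matrix.neg_apply,
      Matrix.one_apply] <;>
    first
      | ring1
      | linear_combination h

/-- The parametrization of solutions of `g^2 = -1` in `SL₂`. -/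
noncomputable def TEquiv (h2 : (2:F) ≠ 0) :
    {g : SL2 // g ^ 2 = -1} ≃ {p : F × (F × F) // p.2.1 * p.2.2 = -(1 + p.1 ^ 2)} where
  toFun g := ⟨(g.1.1 0 0, g.1.1 0 1, g.1.1 1 0), (entries_of_sq_neg_one h2 g.2).2⟩
  invFun p := ⟨mkT p.1.1 p.1.2.1 p.1.2.2 p.2, mkT_sq _ _ _ _⟩
  left_inv g := by
    apply Subtype.ext
    apply Subtype.ext
    have hd := (entries_of_sq_neg_one h2 g.2).1
    show !![g.1.1 0 0, g.1.1 0 1; g.1.1 1 0, -(g.1.1 0 0)] = g.1.1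
    conv_rhs => rw [Matrix.eta_fin_two (g.1.1 : Matrix (Fin 2) (Fin 2) F)]
    rw [hd]
  right_inv p := by
    apply Subtype.ext
    show (_, _, _) = p.1
    obtain ⟨⟨a, b, c⟩, hp⟩ := p
    show ((!![a, b; c, -a] : Matrix (Fin 2) (Fin 2) F) 0 0,
      (!![a, b; c, -a] : Matrix (Fin 2) (Fin 2) F) 0 1,
      (!![a, b; c, -a] : Matrix (Fin 2) (Fin 2) F) 1 0) = (a, b, c)
    simp

lemma card_mul_eq [DecidableEq F] (k : F) :
    Fintype.card {p : F × F // p.1 * p.2 = k} =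
      if k = 0 then 2 * Fintype.card F - 1 else Fintype.card F - 1 := by
  split_ifs with hk
  · subst hk
    rw [Fintype.card_congr (Equiv.subtypeProdEquivSigmaSubtype (fun b c : F => b * c = 0)),
      Fintype.card_sigma]
    have h : ∀ b : F, Fintype.card {c : F // b * c = 0} =
        if b = 0 then Fintype.card F else 1 := by
      intro b
      split_ifs with hb
      · subst hb
        rw [Fintype.card_congr (Equiv.subtypeUnivEquiv (fun c => zero_mul c))]
      · rw [Fintype.card_congr (Equiv.subtypeEquivRight (fun c => by
          constructor
          · intro h; rcases mul_eq_zero.mp h with h | h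
            · exact absurd h hb
            · exact h
          · intro h; rw [h, mul_zero]))]
        exact Fintype.card_subtype_eq 0
    simp only [h]
    rw [Finset.sum_ite, Finset.sum_const, Finset.sum_const, Finset.filter_eq' Finset.univ (0:F),
      Finset.filter_ne' Finset.univ (0:F), Finset.card_erase_of_mem (Finset.mem_univ 0)]
    have hq : 0 < Fintype.card F := Fintype.card_pos
    simp only [Finset.mem_univ, if_true, Finset.card_singleton, smul_eq_mul, Finset.card_univ]
    omega
  · have e : {p : F × F // p.1 * p.2 = k} ≃ {b : F // b ≠ 0} :=
      { toFun := fun p => ⟨p.1.1, by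
          intro h0
          apply hk
          rw [← p.2, h0, zero_mul]⟩
        invFun := fun b => ⟨(b.1, k * b.1⁻¹), by
          rw [mul_comm ((b:F)), mul_assoc, inv_mul_cancel₀ b.2, mul_one]⟩
        left_inv := fun p => by
          apply Subtype.ext
          obtain ⟨⟨b, c⟩, hp⟩ := p
          have hb : b ≠ 0 := by
            intro h0; apply hk; rw [← hp, h0, zero_mul]
          ext
          · rfl
          · show k * b⁻¹ = c
            field_simp [← hp]
            exact hp.symm
        right_inv := fun b => rfl }
    rw [Fintype.card_congr e]
    simp [Fintype.card_subtype_compl]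

lemma card_T [DecidableEq F] (hodd : Odd (Fintype.card F)) :
    Nat.card {g : SL2 // g ^ 2 = -1} =
      ∑ a : F, (if 1 + a ^ 2 = 0 then 2 * Fintype.card F - 1 else Fintype.card F - 1) := by
  rw [Nat.card_congr (TEquiv (two_ne hodd)),
    Nat.card_congr (Equiv.subtypeProdEquivSigmaSubtype
      (fun (a : F) (p : F × F) => p.1 * p.2 = -(1 + a ^ 2))),
    Nat.card_eq_fintype_card, Fintype.card_sigma]
  refine Finset.sum_congr rfl fun a _ => ?_
  rw [card_mul_eq, if_congr (neg_eq_zero (a := 1 + a ^ 2)) rfl rfl]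

lemma card_roots_one (hodd : Odd (Fintype.card F)) (hq : Fintype.card F % 4 = 1) [DecidableEq F] :
    (Finset.univ.filter fun a : F => 1 + a ^ 2 = 0).card = 2 := by
  have h2 := two_ne hodd
  have hsq : IsSquare (-1 : F) := FiniteField.isSquare_neg_one_iff.mpr (by omega)
  obtain ⟨y, hy⟩ := hsq
  have hy0 : y ≠ 0 := by
    intro h0; rw [h0, mul_zero] at hy
    exact one_ne_zero (neg_eq_zero.mp hy)
  have hfil : (Finset.univ.filter fun a : F => 1 + a ^ 2 = 0) = {y, -y} := by
    ext a
    simp only [Finset.mem_filter, Finset.mem_univ, true_and, Finset.mem_insert,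
      Finset.mem_singleton]
    constructor
    · intro h
      have h' : (a - y) * (a + y) = 0 := by linear_combination h + hy
      rcases mul_eq_zero.mp h' with h' | h'
      · left; linear_combination h'
      · right; linear_combination h'
    · rintro (rfl | rfl) <;> linear_combination -hy
  rw [hfil]
  rw [Finset.card_pair]
  intro h
  apply hy0
  have : 2 * y = 0 := by linear_combination h
  rcases mul_eq_zero.mp this with h' | h'
  · exact absurd h' h2
  · exact h'

lemma card_roots_three (hq : Fintype.card F % 4 = 3) [DecidableEq F] :
    (Finset.univ.filter fun a : F => 1 + a ^ 2 = 0).card = 0 := by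
  rw [Finset.card_eq_zero, Finset.filter_eq_empty_iff]
  intro a _
  intro h
  have hsq : IsSquare (-1 : F) := ⟨a, by linear_combination -h⟩
  rw [FiniteField.isSquare_neg_one_iff] at hsq
  exact hsq hq

lemma orderOf_eq_two (hodd : Odd (Fintype.card F)) {g : SL2} (h : g ^ 2 = -1) :
    orderOf (QuotientGroup.mk g : SL2 ⧸ Subgroup.center SL2) = 2 := by
  have h2 := two_ne hodd
  have h1 : (QuotientGroup.mk g : SL2 ⧸ Subgroup.center SL2) ^ 2 = 1 := by
    have : ((QuotientGroup.mk g : SL2 ⧸ Subgroup.center SL2)) ^ 2 =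
        QuotientGroup.mk (g ^ 2) := by
      rw [sq, sq]; rfl
    rw [this, h, QuotientGroup.eq_one_iff]
    exact mem_center_iff'.mpr (Or.inr rfl)
  have hne : (QuotientGroup.mk g : SL2 ⧸ Subgroup.center SL2) ≠ 1 := by
    rw [Ne, QuotientGroup.eq_one_iff, mem_center_iff']
    rintro (rfl | rfl)
    · exact one_ne_neg_one h2 (by rw [← h, one_pow])
    · apply one_ne_neg_one h2
      rw [← h]
      rw [neg_one_sq]
  exact orderOf_eq_prime h1 hne

lemma neg_ne_self (h2 : (2:F) ≠ 0) (g : SL2) : g ≠ -g := by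
  intro h
  have hz : (g : Matrix (Fin 2) (Fin 2) F) = 0 := by
    have hh := congrArg Subtype.val h
    rw [Matrix.SpecialLinearGroup.coe_neg] at hh
    ext i j
    have := congrFun (congrFun hh i) j
    rw [Matrix.neg_apply] at this
    have h' : (2 : F) * g.1 i j = 0 := by linear_combination this
    rcases mul_eq_zero.mp h' with h' | h'
    · exact absurd h' h2
    · simpa using h'
  have := g.2
  rw [hz] at this
  simp at this

lemma double (hodd : Odd (Fintype.card F)) :
    Nat.card {g : SL2 // g ^ 2 = -1} =
      2 * Nat.card {x : SL2 ⧸ Subgroup.center SL2 | orderOf x = 2} := by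
  classical
  have h2 := two_ne hodd
  haveI : Fintype (SL2 ⧸ Subgroup.center SL2) := Fintype.ofFinite _
  set Tf : Finset SL2 := Finset.univ.filter (fun g : SL2 => g ^ 2 = -1) with hTf
  set Sf : Finset (SL2 ⧸ Subgroup.center SL2) :=
    Finset.univ.filter (fun x => orderOf x = 2) with hSf
  have hmap : ∀ g ∈ Tf, (QuotientGroup.mk g : SL2 ⧸ Subgroup.center SL2) ∈ Sf := by
    intro g hg
    rw [hTf, Finset.mem_filter] at hg
    rw [hSf, Finset.mem_filter]
    exact ⟨Finset.mem_univ _, orderOf_eq_two hodd hg.2⟩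
  have key := Finset.card_eq_sum_card_fiberwise hmap
  have fib : ∀ x ∈ Sf, (Tf.filter fun g => (QuotientGroup.mk g : SL2 ⧸ Subgroup.center SL2) = x).card = 2 := by
    intro x hx
    rw [hSf, Finset.mem_filter] at hx
    obtain ⟨g₀, rfl⟩ := QuotientGroup.mk_surjective x
    have hx2 : (QuotientGroup.mk g₀ : SL2 ⧸ Subgroup.center SL2) ^ 2 = 1 := by
      have hpow := pow_orderOf_eq_one (QuotientGroup.mk g₀ : SL2 ⧸ Subgroup.center SL2)
      rw [hx.2] at hpow
      exact hpow
    have hx1 : (QuotientGroup.mk g₀ : SL2 ⧸ Subgroup.center SL2) ≠ 1 := by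
      intro h
      rw [h, orderOf_one] at hx
      omega
    have hgc : g₀ ^ 2 ∈ Subgroup.center SL2 := by
      rw [← QuotientGroup.eq_one_iff, sq]
      rw [sq] at hx2
      exact hx2
    have hg : g₀ ^ 2 = -1 := by
      rcases mem_center_iff'.mp hgc with h | h
      · exfalso
        apply hx1
        rw [QuotientGroup.eq_one_iff, mem_center_iff']
        exact eq_pm_one_of_sq_eq_one h2 h
      · exact h
    have hfil : (Tf.filter fun g => (QuotientGroup.mk g : SL2 ⧸ Subgroup.center SL2) = QuotientGroup.mk g₀)
        = {g₀, -g₀} := by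
      ext g
      rw [Finset.mem_filter, hTf, Finset.mem_filter, Finset.mem_insert, Finset.mem_singleton]
      constructor
      · rintro ⟨⟨-, hgT⟩, hq⟩
        rw [QuotientGroup.eq] at hq
        rcases mem_center_iff'.mp hq with h | h
        · left
          exact inv_mul_eq_one.mp h
        · right
          have h' : g * (g⁻¹ * g₀) = g * (-1) := by rw [h]
          rw [← mul_assoc, mul_inv_cancel, one_mul, mul_neg, mul_one] at h'
          rw [h', neg_neg]
      · rintro (rfl | rfl)
        · exact ⟨⟨Finset.mem_univ _, hg⟩, rfl⟩
        · refine ⟨⟨Finset.mem_univ _, by rw [neg_sq]; exact hg⟩, ?_⟩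
          rw [QuotientGroup.eq]
          have h' : (-g₀)⁻¹ * g₀ = -1 := by rw [inv_neg, neg_mul, inv_mul_cancel]
          rw [h']
          exact mem_center_iff'.mpr (Or.inr rfl)
    rw [hfil, Finset.card_pair (neg_ne_self h2 g₀)]
  have hsum : Tf.card = 2 * Sf.card := by
    rw [key, Finset.sum_congr rfl fib, Finset.sum_const, smul_eq_mul, mul_comm]
  have hT : Nat.card {g : SL2 // g ^ 2 = -1} = Tf.card := by
    rw [Nat.card_eq_fintype_card]
    exact Fintype.card_subtype _
  have hS : Nat.card {x : SL2 ⧸ Subgroup.center SL2 | orderOf x = 2} = Sf.card := by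
    rw [Nat.card_eq_fintype_card]
    exact Fintype.card_subtype _
  rw [hT, hS, hsum]

end Stmt12Aux

theorem stmt12 {F : Type*} [Field F] [Fintype F] (hodd : Odd (Fintype.card F)) :
    (Fintype.card F % 4 = 1 →
      Nat.card {x : Matrix.SpecialLinearGroup (Fin 2) F ⧸
          Subgroup.center (Matrix.SpecialLinearGroup (Fin 2) F) | orderOf x = 2} =
        Fintype.card F * (Fintype.card F + 1) / 2) ∧
    (Fintype.card F % 4 = 3 →
      Nat.card {x : Matrix.SpecialLinearGroup (Fin 2) F ⧸
          Subgroup.center (Matrix.SpecialLinearGroup (Fin 2) F) | orderOf x = 2} =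
        Fintype.card F * (Fintype.card F - 1) / 2) := by
  classical
  have hq2 : 2 ≤ Fintype.card F := Fintype.one_lt_card
  have hdouble := Stmt12Aux.double hodd
  have hcount := Stmt12Aux.card_T hodd
  rw [Finset.sum_ite, Finset.sum_const, Finset.sum_const, smul_eq_mul, smul_eq_mul] at hcount
  have hsplit := Finset.card_filter_add_card_filter_not
    (s := (Finset.univ : Finset F)) (p := fun a : F => 1 + a ^ 2 = 0)
  rw [Finset.card_univ] at hsplit
  constructor
  · intro hq
    have hn := Stmt12Aux.card_roots_one hodd hq
    rw [hn] at hcount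
    have hn' : (Finset.univ.filter fun a : F => ¬(1 + a ^ 2 = 0)).card =
        Fintype.card F - 2 := by omega
    rw [hn'] at hcount
    have hid : 2 * (2 * Fintype.card F - 1) + (Fintype.card F - 2) * (Fintype.card F - 1)
        = Fintype.card F * (Fintype.card F + 1) := by
      have h5 : 5 ≤ Fintype.card F := by omega
      zify [show 1 ≤ 2 * Fintype.card F by omega, show 2 ≤ Fintype.card F by omega,
        show 1 ≤ Fintype.card F by omega]
      ring
    rw [hid] at hcount
    rw [hcount] at hdouble
    omega
  · intro hq
    have hn := Stmt12Aux.card_roots_three hq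
    rw [hn] at hcount
    have hn' : (Finset.univ.filter fun a : F => ¬(1 + a ^ 2 = 0)).card = Fintype.card F := by
      omega
    rw [hn'] at hcount
    have hid : 0 * (2 * Fintype.card F - 1) + Fintype.card F * (Fintype.card F - 1)
        = Fintype.card F * (Fintype.card F - 1) := by omega
    rw [hid] at hcount
    rw [hcount] at hdouble
    omega
end
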